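/- arXiv:2310.06997 — 2 statements merged into one kernel-verified Lean document; each statement's English description precedes it below -/
import Mathlib

section
/- Let x, y, z, w be positive real numbers with z > w satisfying the system: x·y = 600, (x·(z+w)/2)·(y·w/2) = 129600, z² + w² = 1224, and x·w = y·(z−w). Then x = 20, y = 30, z = 30, and w = 18. -/
theorem smt18_solution (x y z w : ℝ) (hx : 0 < x) (hy : 0 < y) (hz : 0 < z)
    (hw : 0 < w) (hzw : z > w)
    (h1 : x * y = 600)
    (h2 : (x * (z + w) / 2) * (y * w / 2) = 129600)
    (h3 : z ^ 2 + w ^ 2 = 1224)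
    (h4 : x * w = y * (z - w)) :
    x = 20 ∧ y = 30 ∧ z = 30 ∧ w = 18 := by
  have hA : (z + w) * w = 864 := by
    linear_combination (1/150) * h2 - ((z + w) * w / 600) * h1
  have key : (w ^ 2 - 324) * (w ^ 2 - 1152) = 0 := by nlinarith [sq_nonneg w, sq_nonneg z, sq_nonneg (z*w)]
  have hw2 : w ^ 2 = 324 := by
    rcases mul_eq_zero.mp key with h | h
    · linarith
    · exfalso
      have hpos : 0 < w * z := mul_pos hw hz
      nlinarith
  have hw18 : w = 18 := by nlinarith
  have hz30 : z = 30 := by nlinarith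
  subst hw18 hz30
  have hy30 : y = 30 := by nlinarith [sq_nonneg (y - 30), sq_nonneg (y + 30)]
  have : x = 20 := by
    have : x * 30 = 600 := by rw [← hy30]; exact h1
    linarith
  exact ⟨this, hy30, rfl, rfl⟩
end

section
/- Let X, Y be real numbers with X + Y = 2952, X·Y = 1492992, and X ≥ Y. Then X = 2304 and Y = 648. -/
theorem smt18_completing_square (X Y : ℝ)
    (h1 : X + Y = 2952) (h2 : X * Y = 1492992) (h3 : X ≥ Y) :
    X = 2304 ∧ Y = 648 := by
  have h : (X - 2304) * (X - 648) = 0 := by nlinarith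
  rcases mul_eq_zero.1 h with h' | h'
  · constructor <;> nlinarith
  · exfalso; nlinarith
end
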